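/- For a Bratteli diagram Br with potential F and β ∈ ℝ, define the left stochastic matrices \underline{Br(β)}^{(j)} over Br_{j-1} × Br_j by \underline{Br(β)}^{(j)}_{v,w} = (Σ_{μ ∈ P^w_j(v)} e^{−βF(μ)}) / (Σ_{ν ∈ P^w_j} e^{−βF(ν)}). Then as β → ∞, \underline{Br(β)}^{(j)} converges entrywise to the matrix \underline{Br}^{(j)} with entries \underline{Br}^{(j)}_{v,w} = #{μ ∈ P^w_j(v) : F(μ) = m_w} / #{μ ∈ P^w_j : F(μ) = m_w}, where m_w = min{F(μ) : μ ∈ P^w_j}. -/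

import Mathlib

open scoped BigOperators

/-- A Bratteli diagram: finite nonempty level sets `V n`, arrows `E n` from level `n`
to level `n+1`, a single root at level `0`, no sinks, and no sources besides the root. -/
structure Bratteli where
  V : ℕ → Type
  E : ℕ → Type
  instVFin : ∀ n, Fintype (V n)
  instEFin : ∀ n, Fintype (E n)
  instVNe : ∀ n, Nonempty (V n)
  instRoot : Subsingleton (V 0)
  src : ∀ n, E n → V n
  rng : ∀ n, E n → V (n + 1)
  noSink : ∀ n (v : V n), ∃ e : E n, src n e = v
  noSource : ∀ n (v : V (n + 1)), ∃ e : E n, rng n e = v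

attribute [instance] Bratteli.instVFin Bratteli.instEFin Bratteli.instVNe Bratteli.instRoot

/-- Finite paths of length `n` starting at the root. -/
abbrev Bratteli.FinPath (B : Bratteli) (n : ℕ) :=
  { p : ∀ i : Fin n, B.E i.val //
    ∀ (i : ℕ) (h : i + 1 < n),
      B.rng i (p ⟨i, Nat.lt_of_succ_lt h⟩) = B.src (i + 1) (p ⟨i + 1, h⟩) }

/-- Infinite paths starting at the root. -/
structure Bratteli.InfPath (B : Bratteli) where
  arrow : ∀ n, B.E n
  compat : ∀ n, B.rng n (arrow n) = B.src (n + 1) (arrow (n + 1))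

/-- The initial segment `p[1,n]` of an infinite path. -/
def Bratteli.InfPath.take {B : Bratteli} (p : B.InfPath) (n : ℕ) : B.FinPath n :=
  ⟨fun i => p.arrow i.val, fun i _ => p.compat i⟩

/-- The endpoint (range) of a finite path of positive length. -/
def pend {B : Bratteli} {n : ℕ} (μ : B.FinPath (n + 1)) : B.V (n + 1) :=
  B.rng n (μ.1 ⟨n, Nat.lt_succ_self n⟩)

/-- The vertex at level `n` through which a path of length `n+1` passes. -/
def through {B : Bratteli} {n : ℕ} (μ : B.FinPath (n + 1)) : B.V n :=
  B.src n (μ.1 ⟨n, Nat.lt_succ_self n⟩)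

/-- The value `F(μ) = Σ_i F(a_i)` of a potential on a finite path. -/
noncomputable def pathVal {B : Bratteli} (F : ∀ n, B.E n → ℝ) {n : ℕ}
    (μ : B.FinPath n) : ℝ :=
  ∑ i : Fin n, F i.val (μ.1 i)

/-- An infinite path `p` from the root is an `F`-geodesic when for every `n`,
`F(p[1,n]) ≤ F(μ)` for every length-`n` path `μ` from the root with the same endpoint. -/
def IsGeodesic {B : Bratteli} (F : ∀ n, B.E n → ℝ) (p : B.InfPath) : Prop :=
  ∀ (n : ℕ) (μ : B.FinPath (n + 1)), pend μ = pend (p.take (n + 1)) →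
    pathVal F (p.take (n + 1)) ≤ pathVal F μ

open scoped Classical

/-- The left stochastic matrix `Br(β)^{(j)}` with entries
`(Σ_{μ ∈ P^w(v)} e^{−βF(μ)}) / (Σ_{ν ∈ P^w} e^{−βF(ν)})`, over paths of length `j+1`
from the root (so from level `j` to level `j+1` in the diagram). -/
noncomputable def stoch (B : Bratteli) (F : ∀ n, B.E n → ℝ) (β : ℝ) (j : ℕ) :
    Matrix (B.V j) (B.V (j + 1)) ℝ :=
  Matrix.of fun v w =>
    (∑ μ : {μ : B.FinPath (j + 1) // pend μ = w ∧ through μ = v},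
        Real.exp (-(β * pathVal F μ.1))) /
      ∑ μ : {μ : B.FinPath (j + 1) // pend μ = w}, Real.exp (-(β * pathVal F μ.1))

/-- The minimum `m_w` of the potential over paths from the root to `w`. -/
noncomputable def mmin (B : Bratteli) (F : ∀ n, B.E n → ℝ) (j : ℕ) (w : B.V (j + 1)) : ℝ :=
  sInf {x | ∃ μ : B.FinPath (j + 1), pend μ = w ∧ pathVal F μ = x}

/-- The limit matrix `\underline{Br}^{(j)}` with entries
`#{μ ∈ P^w(v) : F(μ) = m_w} / #{μ ∈ P^w : F(μ) = m_w}`. -/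
noncomputable def stochLim (B : Bratteli) (F : ∀ n, B.E n → ℝ) (j : ℕ) :
    Matrix (B.V j) (B.V (j + 1)) ℝ :=
  Matrix.of fun v w =>
    (Nat.card {μ : B.FinPath (j + 1) //
        pend μ = w ∧ through μ = v ∧ pathVal F μ = mmin B F j w} : ℝ) /
      (Nat.card {μ : B.FinPath (j + 1) // pend μ = w ∧ pathVal F μ = mmin B F j w} : ℝ)

/-- Every vertex is reachable from the root. -/
lemma exists_path_to (B : Bratteli) : ∀ (n : ℕ) (w : B.V (n + 1)),
    ∃ μ : B.FinPath (n + 1), pend μ = w := by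
  intro n
  induction n with
  | zero =>
    intro w
    obtain ⟨e, he⟩ := B.noSource 0 w
    refine ⟨⟨fun i => Fin.cases e (fun i => i.elim0) i, ?_⟩, ?_⟩
    · intro i h; omega
    · show B.rng 0 (Fin.cases (motive := fun i : Fin 1 => B.E i.val)
        e (fun i => i.elim0) ⟨0, Nat.lt_succ_self 0⟩) = w
      exact he
  | succ n ih =>
    intro w
    obtain ⟨e, he⟩ := B.noSource (n + 1) w
    obtain ⟨μ, hμ⟩ := ih (B.src (n + 1) e)
    refine ⟨⟨fun i => Fin.lastCases (motive := fun i : Fin (n + 2) => B.E i.val)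
        e (fun k => μ.1 k) i, ?_⟩, ?_⟩
    · intro i h
      by_cases hi : i + 1 < n + 1
      · show B.rng i (Fin.lastCases (motive := fun i : Fin (n + 2) => B.E i.val)
            e (fun k => μ.1 k) (Fin.castSucc ⟨i, Nat.lt_of_succ_lt hi⟩))
          = B.src (i + 1) (Fin.lastCases (motive := fun i : Fin (n + 2) => B.E i.val)
            e (fun k => μ.1 k) (Fin.castSucc ⟨i + 1, hi⟩))
        rw [Fin.lastCases_castSucc, Fin.lastCases_castSucc]
        exact μ.2 i hi
      · have hin : i = n := by omega
        subst hin
        show B.rng i (Fin.lastCases (motive := fun k : Fin (i + 2) => B.E k.val)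
            e (fun k => μ.1 k) (Fin.castSucc ⟨i, Nat.lt_succ_self i⟩))
          = B.src (i + 1) (Fin.lastCases (motive := fun k : Fin (i + 2) => B.E k.val)
            e (fun k => μ.1 k) (Fin.last (i + 1)))
        rw [Fin.lastCases_castSucc, Fin.lastCases_last]
        exact hμ ▸ rfl
    · show B.rng (n + 1) (Fin.lastCases (motive := fun i : Fin (n + 2) => B.E i.val)
        e (fun k => μ.1 k) (Fin.last (n + 1))) = w
      rw [Fin.lastCases_last]; exact he

/-- Convergence of sums of decaying exponentials to the count of zeros. -/
lemma sum_exp_tendsto {ι : Type} [Fintype ι] (f : ι → ℝ) (h : ∀ i, 0 ≤ f i) :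
    Filter.Tendsto (fun β : ℝ => ∑ i, Real.exp (-(β * f i))) Filter.atTop
      (nhds ((Finset.univ.filter (fun i => f i = 0)).card : ℝ)) := by
  have key : Filter.Tendsto (fun β : ℝ => ∑ i, Real.exp (-(β * f i))) Filter.atTop
      (nhds (∑ i, if f i = 0 then (1 : ℝ) else 0)) := by
    refine tendsto_finset_sum _ (fun i _ => ?_)
    by_cases hi : f i = 0
    · simp only [hi, if_true, mul_zero, neg_zero, Real.exp_zero]
      exact tendsto_const_nhds
    · have hpos : 0 < f i := lt_of_le_of_ne (h i) (Ne.symm hi)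
      simp only [hi, if_false]
      have h1 : Filter.Tendsto (fun β : ℝ => -(β * f i)) Filter.atTop Filter.atBot := by
        exact Filter.tendsto_neg_atTop_atBot.comp (Filter.tendsto_id.atTop_mul_const hpos)
      exact Real.tendsto_exp_atBot.comp h1
  have : (∑ i, if f i = 0 then (1 : ℝ) else 0)
      = ((Finset.univ.filter (fun i => f i = 0)).card : ℝ) := by
    rw [Finset.sum_boole]
  rwa [this] at key

/-- As `β → ∞` the stochastic matrices `Br(β)^{(j)}` converge entrywise to
`\underline{Br}^{(j)}`. -/
theorem stmt_7 (B : Bratteli) (F : ∀ n, B.E n → ℝ) (j : ℕ) (v : B.V j) (w : B.V (j + 1)) :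
    Filter.Tendsto (fun β : ℝ => stoch B F β j v w) Filter.atTop
      (nhds (stochLim B F j v w)) := by
  set m := mmin B F j w with hm
  -- basic facts about m
  have hset : {x | ∃ μ : B.FinPath (j + 1), pend μ = w ∧ pathVal F μ = x}
      = Set.range (fun μ : {μ : B.FinPath (j + 1) // pend μ = w} => pathVal F μ.1) := by
    ext x
    constructor
    · rintro ⟨μ, h1, h2⟩; exact ⟨⟨μ, h1⟩, h2⟩
    · rintro ⟨⟨μ, h1⟩, h2⟩; exact ⟨μ, h1, h2⟩
  have hfin : {x | ∃ μ : B.FinPath (j + 1), pend μ = w ∧ pathVal F μ = x}.Finite := by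
    rw [hset]; exact Set.finite_range _
  obtain ⟨μ0, hμ0⟩ := exists_path_to B j w
  have hne : {x | ∃ μ : B.FinPath (j + 1), pend μ = w ∧ pathVal F μ = x}.Nonempty :=
    ⟨pathVal F μ0, μ0, hμ0, rfl⟩
  have hmem : m ∈ {x | ∃ μ : B.FinPath (j + 1), pend μ = w ∧ pathVal F μ = x} :=
    hne.csInf_mem hfin
  have hle : ∀ μ : B.FinPath (j + 1), pend μ = w → m ≤ pathVal F μ := by
    intro μ hμ
    exact csInf_le hfin.bddBelow ⟨μ, hμ, rfl⟩
  -- rewrite each entry, factoring out exp (-(β * m))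
  have hfactor : ∀ β : ℝ, stoch B F β j v w =
      (∑ μ : {μ : B.FinPath (j + 1) // pend μ = w ∧ through μ = v},
          Real.exp (-(β * (pathVal F μ.1 - m)))) /
        ∑ μ : {μ : B.FinPath (j + 1) // pend μ = w},
          Real.exp (-(β * (pathVal F μ.1 - m))) := by
    intro β
    have h1 : (∑ μ : {μ : B.FinPath (j + 1) // pend μ = w ∧ through μ = v},
        Real.exp (-(β * pathVal F μ.1)))
        = Real.exp (-(β * m)) * ∑ μ : {μ : B.FinPath (j + 1) // pend μ = w ∧ through μ = v},
          Real.exp (-(β * (pathVal F μ.1 - m))) := by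
      rw [Finset.mul_sum]
      refine Finset.sum_congr rfl (fun μ _ => ?_)
      rw [← Real.exp_add]; ring_nf
    have h2 : (∑ μ : {μ : B.FinPath (j + 1) // pend μ = w},
        Real.exp (-(β * pathVal F μ.1)))
        = Real.exp (-(β * m)) * ∑ μ : {μ : B.FinPath (j + 1) // pend μ = w},
          Real.exp (-(β * (pathVal F μ.1 - m))) := by
      rw [Finset.mul_sum]
      refine Finset.sum_congr rfl (fun μ _ => ?_)
      rw [← Real.exp_add]; ring_nf
    show (∑ μ : {μ : B.FinPath (j + 1) // pend μ = w ∧ through μ = v},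
        Real.exp (-(β * pathVal F μ.1))) /
        (∑ μ : {μ : B.FinPath (j + 1) // pend μ = w}, Real.exp (-(β * pathVal F μ.1))) = _
    rw [h1, h2, mul_div_mul_left _ _ (Real.exp_ne_zero _)]
  -- limits of numerator and denominator
  have hnum := sum_exp_tendsto
    (fun μ : {μ : B.FinPath (j + 1) // pend μ = w ∧ through μ = v} => pathVal F μ.1 - m)
    (fun μ => sub_nonneg.2 (hle μ.1 μ.2.1))
  have hden := sum_exp_tendsto
    (fun μ : {μ : B.FinPath (j + 1) // pend μ = w} => pathVal F μ.1 - m)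
    (fun μ => sub_nonneg.2 (hle μ.1 μ.2))
  -- identify the limit counts
  have hcard_num : (Finset.univ.filter
      (fun μ : {μ : B.FinPath (j + 1) // pend μ = w ∧ through μ = v} =>
        pathVal F μ.1 - m = 0)).card
      = Nat.card {μ : B.FinPath (j + 1) //
          pend μ = w ∧ through μ = v ∧ pathVal F μ = m} := by
    rw [Nat.card_eq_fintype_card, Fintype.card_subtype]
    apply Finset.card_nbij (fun μ => μ.1)
    · intro a ha
      simp only [Finset.mem_filter, Finset.mem_univ, true_and, sub_eq_zero] at ha ⊢
      exact Finset.mem_filter.2 ⟨Finset.mem_univ _, a.2.1, a.2.2, (Finset.mem_filter.1 (Finset.mem_coe.1 ha)).2⟩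
    · intro a ha b hb hab
      exact Subtype.ext hab
    · intro b hb
      simp only [Finset.coe_filter, Finset.mem_univ, true_and, Set.mem_setOf_eq] at hb
      refine ⟨⟨b, hb.1, hb.2.1⟩, ?_, rfl⟩
      simp only [Finset.coe_filter, Finset.mem_univ, true_and, Set.mem_setOf_eq]
      exact sub_eq_zero.2 hb.2.2
  have hcard_den : (Finset.univ.filter
      (fun μ : {μ : B.FinPath (j + 1) // pend μ = w} => pathVal F μ.1 - m = 0)).card
      = Nat.card {μ : B.FinPath (j + 1) // pend μ = w ∧ pathVal F μ = m} := by
    rw [Nat.card_eq_fintype_card, Fintype.card_subtype]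
    apply Finset.card_nbij (fun μ => μ.1)
    · intro a ha
      simp only [Finset.mem_filter, Finset.mem_univ, true_and, sub_eq_zero] at ha ⊢
      exact Finset.mem_filter.2 ⟨Finset.mem_univ _, a.2, (Finset.mem_filter.1 (Finset.mem_coe.1 ha)).2⟩
    · intro a ha b hb hab
      exact Subtype.ext hab
    · intro b hb
      simp only [Finset.coe_filter, Finset.mem_univ, true_and, Set.mem_setOf_eq] at hb
      refine ⟨⟨b, hb.1⟩, ?_, rfl⟩
      simp only [Finset.coe_filter, Finset.mem_univ, true_and, Set.mem_setOf_eq]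
      exact sub_eq_zero.2 hb.2
  rw [hcard_num] at hnum
  rw [hcard_den] at hden
  -- the denominator's limit is nonzero
  have hpos : 0 < Nat.card {μ : B.FinPath (j + 1) // pend μ = w ∧ pathVal F μ = m} := by
    rw [Nat.card_pos_iff]
    obtain ⟨μ1, h1, h2⟩ := hmem
    exact ⟨⟨⟨μ1, h1, h2⟩⟩, inferInstance⟩
  have hden_ne : ((Nat.card {μ : B.FinPath (j + 1) //
      pend μ = w ∧ pathVal F μ = m} : ℕ) : ℝ) ≠ 0 := by
    exact_mod_cast hpos.ne'
  have := Filter.Tendsto.div hnum hden hden_ne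
  have heq : (fun β : ℝ => stoch B F β j v w) = fun β : ℝ =>
      (∑ μ : {μ : B.FinPath (j + 1) // pend μ = w ∧ through μ = v},
          Real.exp (-(β * (pathVal F μ.1 - m)))) /
        ∑ μ : {μ : B.FinPath (j + 1) // pend μ = w},
          Real.exp (-(β * (pathVal F μ.1 - m))) := funext hfactor
  rw [heq]
  exact this
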